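/- Let p be a real polynomial with degree deg p ≥ 2. Then for every v ∈ ℝ one has γ'(v) = ∞; that is, for every M > 0 there exists a finite set W ⊆ Λ(v) such that |λ − λ'| ≥ M for all distinct λ, λ' ∈ Λ(v)\W. -/
import Mathlib


open MeasureTheory Real Complex
open scoped ENNReal

/-- λ_k(v) = p(k) - k v -/
noncomputable def lamk (p : ℤ → ℝ) (v : ℝ) (k : ℤ) : ℝ := p k - k * v

/-- Ξ_k(v) = {m : λ_m(v) = λ_k(v)} -/
def XiSet (p : ℤ → ℝ) (v : ℝ) (k : ℤ) : Set ℤ := {m | lamk p v m = lamk p v k}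

/-- Π(v) = {k : ∃ m ≠ k, λ_k(v) = λ_m(v)} -/
def PiV (p : ℤ → ℝ) (v : ℝ) : Set ℤ := {k | ∃ m : ℤ, m ≠ k ∧ lamk p v k = lamk p v m}

/-- Λ(v) = {λ_k(v) : k ∈ ℤ} -/
def LamV (p : ℤ → ℝ) (v : ℝ) : Set ℝ := Set.range (lamk p v)

/-- γ'(v) = sup over finite W ⊆ Λ(v) of the separation gap of Λ(v) \ W, valued in ℝ≥0∞. -/
noncomputable def gammaP (p : ℤ → ℝ) (v : ℝ) : ℝ≥0∞ :=
  ⨆ (W : Finset ℝ) (_ : ↑W ⊆ LamV p v),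
    ⨅ (a : ℝ) (_ : a ∈ LamV p v \ ↑W) (b : ℝ) (_ : b ∈ LamV p v \ ↑W) (_ : a ≠ b),
      ENNReal.ofReal |a - b|

/-- The solution u(t,x) = ∑_k c_k e^{i(p(k)t + kx)} of ∂_t u = iP(D)u. -/
noncomputable def solD (p : ℤ → ℝ) (c : ℤ → ℂ) (t x : ℝ) : ℂ :=
  ∑' k : ℤ, c k * Complex.exp (Complex.I * ((p k : ℂ) * (t : ℂ) + (k : ℂ) * (x : ℂ)))



section GapAux
open Polynomial Filter Asymptotics

lemma lower_aux (q : Polynomial ℝ) (hq : q ≠ 0) :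
    ∃ R : ℝ, ∀ x : ℝ, R ≤ x → |q.leadingCoeff| / 2 * |x| ^ q.natDegree ≤ |q.eval x| := by
  have h := (Polynomial.isEquivalent_atTop_lead q).isLittleO.def (c := 1/2) (by norm_num)
  rw [Filter.eventually_atTop] at h
  obtain ⟨R, hR⟩ := h
  refine ⟨R, fun x hx => ?_⟩
  have h2 := hR x hx
  simp only [Pi.sub_apply, Real.norm_eq_abs] at h2
  have h3 : |q.leadingCoeff * x ^ q.natDegree| - |q.eval x| ≤ |q.eval x - q.leadingCoeff * x ^ q.natDegree| := by
    rw [_root_.abs_sub_comm]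
    exact _root_.abs_sub_abs_le_abs_sub _ _
  have h4 : |q.leadingCoeff * x ^ q.natDegree| = |q.leadingCoeff| * |x| ^ q.natDegree := by
    rw [_root_.abs_mul, _root_.abs_pow]
  nlinarith [_root_.abs_nonneg (q.eval x), _root_.abs_nonneg (q.leadingCoeff * x ^ q.natDegree)]

lemma lower (q : Polynomial ℝ) (hq : q ≠ 0) :
    ∃ ε > (0:ℝ), ∃ R ≥ (1:ℝ), ∀ x : ℝ, R ≤ |x| → ε * |x| ^ q.natDegree ≤ |q.eval x| := by
  obtain ⟨R1, h1⟩ := lower_aux q hq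
  set q' := q.comp (-X) with hq'def
  have hqq' : ∀ y : ℝ, q'.eval y = q.eval (-y) := by
    intro y; simp [hq'def]
  have hq'ne : q' ≠ 0 := by
    intro h
    apply hq
    have : ∀ y : ℝ, q.eval y = 0 := by
      intro y
      have := hqq' (-y)
      rw [h] at this
      simpa using this.symm
    exact Polynomial.funext fun y => by simp [this y]
  have hdeg' : q'.natDegree = q.natDegree := by
    rw [hq'def, natDegree_comp]; simp
  obtain ⟨R2, h2⟩ := lower_aux q' hq'ne
  refine ⟨min (|q.leadingCoeff| / 2) (|q'.leadingCoeff| / 2), ?_, max 1 (max R1 R2), le_max_left _ _, ?_⟩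
  · apply lt_min
    · exact div_pos (abs_pos.mpr (leadingCoeff_ne_zero.mpr hq)) two_pos
    · exact div_pos (abs_pos.mpr (leadingCoeff_ne_zero.mpr hq'ne)) two_pos
  · intro x hx
    rcases le_or_gt 0 x with hx0 | hx0
    · have hxa : |x| = x := _root_.abs_of_nonneg hx0
      have : R1 ≤ x := by rw [hxa] at hx; exact le_trans (le_trans (le_max_left _ _) (le_max_right _ _)) hx
      calc min (|q.leadingCoeff| / 2) (|q'.leadingCoeff| / 2) * |x| ^ q.natDegree
          ≤ |q.leadingCoeff| / 2 * |x| ^ q.natDegree := by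
            apply mul_le_mul_of_nonneg_right (min_le_left _ _) (by positivity)
        _ ≤ |q.eval x| := h1 x this
    · have hxa : |x| = -x := _root_.abs_of_neg hx0
      have : R2 ≤ -x := by rw [hxa] at hx; exact le_trans (le_trans (le_max_right _ _) (le_max_right _ _)) hx
      have h5 := h2 (-x) this
      rw [hqq' (-x), neg_neg, hdeg'] at h5
      have hxx : |(-x)| = |x| := _root_.abs_neg x
      rw [hxx] at h5
      calc min (|q.leadingCoeff| / 2) (|q'.leadingCoeff| / 2) * |x| ^ q.natDegree
          ≤ |q'.leadingCoeff| / 2 * |x| ^ q.natDegree := by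
            apply mul_le_mul_of_nonneg_right (min_le_right _ _) (by positivity)
        _ ≤ |q.eval x| := h5


-- MVT for polynomials
lemma mvt_poly (F : Polynomial ℝ) {x y : ℝ} (h : x < y) :
    ∃ c ∈ Set.Ioo x y, F.eval y - F.eval x = (y - x) * (F.derivative.eval c) := by
  obtain ⟨c, hc, hc2⟩ := exists_hasDerivAt_eq_slope (fun t => F.eval t) (fun t => F.derivative.eval t) h
    (F.continuousOn) (fun t _ => F.hasDerivAt t)
  refine ⟨c, hc, ?_⟩
  have hxy : y - x ≠ 0 := by linarith
  field_simp at hc2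
  linarith [hc2]

-- derivative natDegree
lemma deriv_natDegree (F : Polynomial ℝ) (hd : 1 ≤ F.natDegree) :
    F.derivative.natDegree = F.natDegree - 1 := by
  have hsub : F.natDegree - 1 + 1 = F.natDegree := Nat.sub_add_cancel hd
  have hco : F.derivative.coeff (F.natDegree - 1) = F.coeff F.natDegree * (F.natDegree : ℝ) := by
    rw [coeff_derivative, hsub]
    congr 1
    exact_mod_cast congrArg (Nat.cast (R := ℝ)) hsub
  have hne : F.derivative.coeff (F.natDegree - 1) ≠ 0 := by
    rw [hco]
    apply mul_ne_zero
    · rw [← leadingCoeff]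
      exact leadingCoeff_ne_zero.mpr (fun h => by simp [h] at hd)
    · have : 0 < F.natDegree := hd
      positivity
  exact le_antisymm (natDegree_derivative_le F) (le_natDegree_of_ne_zero hne)

-- upper bound by coefficient sum
lemma poly_upper (H : Polynomial ℝ) (n : ℕ) (hn : H.natDegree < n) :
    ∃ C ≥ (0:ℝ), ∀ x : ℝ, 1 ≤ x → |H.eval x| ≤ C * x ^ (n - 1) := by
  refine ⟨∑ i ∈ Finset.range n, |H.coeff i|, Finset.sum_nonneg fun i _ => _root_.abs_nonneg _, fun x hx => ?_⟩
  rw [eval_eq_sum_range' hn, Finset.sum_mul]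
  refine (Finset.abs_sum_le_sum_abs _ _).trans (Finset.sum_le_sum fun i hi => ?_)
  rw [_root_.abs_mul, _root_.abs_pow, _root_.abs_of_nonneg (by linarith : (0:ℝ) ≤ x)]
  have h1 : x ^ i ≤ x ^ (n - 1) :=
    pow_le_pow_right₀ hx (Nat.le_sub_one_of_lt (Finset.mem_range.mp hi))
  exact mul_le_mul_of_nonneg_left h1 (_root_.abs_nonneg _)


-- g_s lemma
lemma gs_lemma (F : Polynomial ℝ) (s M : ℝ) (hM : 0 < M) :
    ∃ R : ℝ, ∀ x : ℝ, R ≤ x →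
      (∀ y : ℝ, F.eval y = F.eval (s - y)) ∨ M ≤ |F.eval x - F.eval (s - x)| := by
  set G := F - F.comp (C s - X) with hGdef
  have hGe : ∀ y : ℝ, G.eval y = F.eval y - F.eval (s - y) := by
    intro y; simp [hGdef, eval_comp]
  rcases eq_or_ne G 0 with h0 | h0
  · refine ⟨0, fun x _ => Or.inl fun y => ?_⟩
    have := hGe y
    rw [h0] at this
    simp at this
    linarith
  · have hdeg : 0 < G.natDegree := by
      by_contra h
      push_neg at h
      have h00 : G.natDegree = 0 := Nat.le_zero.mp h
      have hc := eq_C_of_natDegree_eq_zero h00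
      have e0 := hGe 0
      have es := hGe s
      rw [hc] at e0 es
      simp at e0 es
      have : G.coeff 0 = 0 := by linarith
      rw [this] at hc
      simp at hc
      exact h0 hc
    have hdeg' : 0 < G.degree := natDegree_pos_iff_degree_pos.mp hdeg
    have := (Polynomial.abs_tendsto_atTop G hdeg').eventually_ge_atTop M
    rw [eventually_atTop] at this
    obtain ⟨R, hR⟩ := this
    refine ⟨R, fun x hx => Or.inr ?_⟩
    have := hR x hx
    rwa [hGe] at this

-- finset version
lemma gs_finset (F : Polynomial ℝ) (M : ℝ) (hM : 0 < M) (T : Finset ℤ) :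
    ∃ R : ℝ, ∀ s ∈ T, ∀ x : ℝ, R ≤ x →
      (∀ y : ℝ, F.eval y = F.eval ((s : ℝ) - y)) ∨ M ≤ |F.eval x - F.eval ((s : ℝ) - x)| := by
  induction T using Finset.induction with
  | empty => exact ⟨0, by simp⟩
  | @insert s T hs ih =>
    obtain ⟨R1, h1⟩ := ih
    obtain ⟨R2, h2⟩ := gs_lemma F (s : ℝ) M hM
    refine ⟨max R1 R2, fun t ht x hx => ?_⟩
    rcases Finset.mem_insert.mp ht with rfl | ht'
    · exact h2 x (le_trans (le_max_right _ _) hx)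
    · exact h1 t ht' x (le_trans (le_max_left _ _) hx)

-- odd case
lemma odd_case (F : Polynomial ℝ) (hd2 : 2 ≤ F.natDegree) (hodd : Odd F.natDegree)
    (M : ℝ) (hM : 0 < M) :
    ∃ R : ℝ, ∀ x y : ℝ, R ≤ x → y ≤ -R → M ≤ |F.eval x - F.eval y| := by
  have hF0 : F ≠ 0 := fun h => by simp [h] at hd2
  have hdpos : 0 < F.degree := natDegree_pos_iff_degree_pos.mp (by omega)
  set Fc := F.comp (-X) with hFcdef
  have hFce : ∀ y : ℝ, Fc.eval y = F.eval (-y) := by intro y; simp [hFcdef, eval_comp]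
  have hFcd : Fc.natDegree = F.natDegree := by rw [hFcdef, natDegree_comp]; simp
  have hFcdeg : 0 < Fc.degree := natDegree_pos_iff_degree_pos.mp (by omega)
  have hFclc : Fc.leadingCoeff = -F.leadingCoeff := by
    rw [hFcdef, leadingCoeff_comp (by simp), leadingCoeff_neg, leadingCoeff_X, hodd.neg_one_pow]
    ring
  rcases lt_or_gt_of_ne (leadingCoeff_ne_zero.mpr hF0) with ha | ha
  · -- leadingCoeff < 0 : F → -∞ at +∞, Fc → +∞ at +∞
    have t1 := Polynomial.tendsto_atBot_of_leadingCoeff_nonpos F hdpos ha.le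
    have t2 := Polynomial.tendsto_atTop_of_leadingCoeff_nonneg Fc hFcdeg (by rw [hFclc]; linarith)
    obtain ⟨R1, hR1⟩ := eventually_atTop.mp (t1.eventually_le_atBot (-M))
    obtain ⟨R2, hR2⟩ := eventually_atTop.mp (t2.eventually_ge_atTop M)
    refine ⟨max R1 R2, fun x y hx hy => ?_⟩
    have e1 : F.eval x ≤ -M := hR1 x (le_trans (le_max_left _ _) hx)
    have e2 : M ≤ F.eval y := by
      have := hR2 (-y) (by linarith [le_max_right R1 R2])
      rwa [hFce, neg_neg] at this
    rw [_root_.abs_sub_comm, _root_.abs_of_nonneg (by linarith)]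
    linarith
  · have t1 := Polynomial.tendsto_atTop_of_leadingCoeff_nonneg F hdpos ha.le
    have t2 := Polynomial.tendsto_atBot_of_leadingCoeff_nonpos Fc hFcdeg (by rw [hFclc]; linarith)
    obtain ⟨R1, hR1⟩ := eventually_atTop.mp (t1.eventually_ge_atTop M)
    obtain ⟨R2, hR2⟩ := eventually_atTop.mp (t2.eventually_le_atBot (-M))
    refine ⟨max R1 R2, fun x y hx hy => ?_⟩
    have e1 : M ≤ F.eval x := hR1 x (le_trans (le_max_left _ _) hx)
    have e2 : F.eval y ≤ -M := by
      have := hR2 (-y) (by linarith [le_max_right R1 R2])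
      rwa [hFce, neg_neg] at this
    rw [_root_.abs_of_nonneg (by linarith)]
    linarith

-- HH degree bound for even degree
lemma HH_deg (F : Polynomial ℝ) (hd2 : 2 ≤ F.natDegree) (heven : Even F.natDegree) :
    (F.comp (-X) - F).natDegree < F.natDegree := by
  have hF0 : F ≠ 0 := fun h => by simp [h] at hd2
  set HH := F.comp (-X) - F with hHdef
  have hcompd : (F.comp (-X)).natDegree = F.natDegree := by rw [natDegree_comp]; simp
  have hclc : (F.comp (-X)).leadingCoeff = F.leadingCoeff := by
    rw [leadingCoeff_comp (by simp), leadingCoeff_neg, leadingCoeff_X, heven.neg_one_pow]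
    ring
  have hcoefftop : HH.coeff F.natDegree = 0 := by
    rw [hHdef, coeff_sub]
    have e1 : (F.comp (-X)).coeff F.natDegree = (F.comp (-X)).leadingCoeff := by
      rw [leadingCoeff, hcompd]
    rw [e1, hclc, leadingCoeff]
    ring
  have hle : HH.natDegree ≤ F.natDegree :=
    le_trans (natDegree_sub_le _ _) (by simp [hcompd])
  rcases eq_or_ne HH 0 with h0 | h0
  · rw [h0]; simpa using (by omega : 0 < F.natDegree)
  · rcases lt_or_eq_of_le hle with h | h
    · exact h
    · exfalso
      apply leadingCoeff_ne_zero.mpr h0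
      rw [leadingCoeff, h, hcoefftop]
set_option maxHeartbeats 2000000 in
lemma key (F : Polynomial ℝ) (hd : 2 ≤ F.natDegree) (M : ℝ) (hM : 0 < M) :
    ∃ K : ℤ, 1 ≤ K ∧ ∀ k m : ℤ, (K : ℝ) < |(k : ℝ)| → (K : ℝ) < |(m : ℝ)| →
      F.eval (k : ℝ) ≠ F.eval (m : ℝ) → M ≤ |F.eval (k : ℝ) - F.eval (m : ℝ)| := by
  set d := F.natDegree with hddef
  set q := F.derivative with hqdef
  have he : q.natDegree = d - 1 := deriv_natDegree F (by omega)
  have he1 : 1 ≤ q.natDegree := by omega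
  have hq0 : q ≠ 0 := fun h => by simp [h] at he1
  obtain ⟨ε, hε, R1, hR11, hR1⟩ := lower q hq0
  set e := q.natDegree with hedef
  set HH := F.comp (-X) - F with hHHdef
  have hHHe : ∀ x : ℝ, HH.eval x = F.eval (-x) - F.eval x := by
    intro x; simp [hHHdef, eval_comp]
  obtain ⟨C, hC0, hCb⟩ : ∃ C ≥ (0:ℝ), Even d → ∀ x : ℝ, 1 ≤ x → |HH.eval x| ≤ C * x ^ e := by
    rcases Nat.even_or_odd d with hev | hod
    · obtain ⟨C, h0, hb⟩ := poly_upper HH d (HH_deg F hd hev)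
      exact ⟨C, h0, fun _ x hx => by rw [he]; exact hb x hx⟩
    · exact ⟨0, le_refl 0, fun hev => absurd hev (Nat.not_even_iff_odd.mpr hod)⟩
  obtain ⟨R4, hR4⟩ : ∃ R4 : ℝ, Odd d →
      ∀ x y : ℝ, R4 ≤ x → y ≤ -R4 → M ≤ |F.eval x - F.eval y| := by
    rcases Nat.even_or_odd d with hev | hod
    · exact ⟨0, fun hod => absurd hev (Nat.not_even_iff_odd.mpr hod)⟩
    · obtain ⟨R, hR⟩ := odd_case F hd hod M hM
      exact ⟨R, fun _ => hR⟩
  set S : ℤ := ⌈(C + M) / ε⌉ with hSdef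
  have hS : (C + M) / ε ≤ (S : ℝ) := Int.le_ceil _
  have hS0 : 0 ≤ S := Int.ceil_nonneg (by positivity)
  obtain ⟨RT, hRT⟩ := gs_finset F M hM (Finset.Icc (-S) S)
  set B : ℝ := max 1 (max R1 (max RT (max R4 (M / ε)))) with hBdef
  set K : ℤ := ⌈B⌉ with hKdef
  have hKB : B ≤ (K : ℝ) := Int.le_ceil B
  have hB1 : (1:ℝ) ≤ B := le_max_left _ _
  have hK1r : (1:ℝ) ≤ (K:ℝ) := le_trans hB1 hKB
  have hK1 : 1 ≤ K := by exact_mod_cast hK1r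
  have hKR1 : R1 ≤ (K:ℝ) := le_trans (le_trans (le_max_left _ _) (le_max_right _ _)) hKB
  have hKRT : RT ≤ (K:ℝ) :=
    le_trans (le_trans (le_trans (le_max_left _ _) (le_max_right _ _)) (le_max_right _ _)) hKB
  have hKR4 : R4 ≤ (K:ℝ) :=
    le_trans (le_trans (le_trans (le_trans (le_max_left _ _) (le_max_right _ _))
      (le_max_right _ _)) (le_max_right _ _)) hKB
  have hKMε : M / ε ≤ (K:ℝ) :=
    le_trans (le_trans (le_trans (le_trans (le_max_right _ _) (le_max_right _ _))
      (le_max_right _ _)) (le_max_right _ _)) hKB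
  -- lower bound on |q.eval c| for |c| ≥ K
  have hqlow : ∀ c : ℝ, (K:ℝ) ≤ |c| → ε * |c| ^ e ≤ |q.eval c| :=
    fun c hc => hR1 c (le_trans hKR1 hc)
  have hKpow : ∀ t : ℝ, (K:ℝ) ≤ t → M ≤ ε * t ^ e := by
    intro t ht
    have ht1 : (1:ℝ) ≤ t := le_trans hK1r ht
    have h1 : t ≤ t ^ e := le_self_pow₀ ht1 (by omega)
    have h2 : M / ε ≤ t := le_trans hKMε ht
    have h3 : M ≤ ε * t := by
      rw [div_le_iff₀ hε] at h2; linarith [h2]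
    nlinarith
  -- same-sign estimate
  have hsame : ∀ x y : ℝ, (K:ℝ) < |x| → (K:ℝ) < |y| → x < y → (0 ≤ x ∨ y ≤ 0) →
      1 ≤ y - x → M ≤ |F.eval y - F.eval x| := by
    intro x y hx hy hxy hsgn h1
    obtain ⟨c, hc, heq⟩ := mvt_poly F hxy
    have hcK : (K:ℝ) ≤ |c| := by
      rcases hsgn with h | h
      · have hcpos : 0 ≤ c := le_trans h hc.1.le
        rw [_root_.abs_of_nonneg hcpos]
        rw [_root_.abs_of_nonneg h] at hx
        linarith [hc.1]
      · have hcneg : c ≤ 0 := le_trans hc.2.le h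
        rw [_root_.abs_of_nonpos hcneg]
        rw [_root_.abs_of_nonpos h] at hy
        linarith [hc.2]
    calc M ≤ ε * |c| ^ e := hKpow _ hcK
      _ ≤ |q.eval c| := hqlow c hcK
      _ ≤ (y - x) * |q.eval c| := le_mul_of_one_le_left (_root_.abs_nonneg _) h1
      _ = |F.eval y - F.eval x| := by
          rw [heq, _root_.abs_mul, _root_.abs_of_pos (by linarith : (0:ℝ) < y - x)]
  -- mixed-sign estimate
  have hmix : ∀ k m : ℤ, (K:ℝ) < (k:ℝ) → (m:ℝ) < -(K:ℝ) →
      F.eval (k:ℝ) ≠ F.eval (m:ℝ) → M ≤ |F.eval (k:ℝ) - F.eval (m:ℝ)| := by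
    intro k m hk hm hne
    rcases Nat.even_or_odd d with hev | hod
    · -- even degree
      by_cases hs : |k + m| ≤ S
      · have hmem : (k + m) ∈ Finset.Icc (-S) S := by
          rw [Finset.mem_Icc]; constructor <;> [linarith [_root_.abs_le.mp hs |>.1]; exact (_root_.abs_le.mp hs).2]
        have hxk : RT ≤ (k:ℝ) := le_trans hKRT hk.le
        have hcast : ((k + m : ℤ) : ℝ) - (k:ℝ) = (m:ℝ) := by push_cast; ring
        rcases hRT (k + m) hmem (k:ℝ) hxk with hall | hbig
        · exact absurd (by rw [hall (k:ℝ), hcast]) hne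
        · rwa [hcast] at hbig
      · push_neg at hs
        have hmK : (K:ℝ) < -(m:ℝ) := by linarith
        rcases le_or_gt (-m) k with hkm | hkm
        · -- k ≥ -m, so s := k+m ≥ 0 and k + m > S
          have hs' : S < k + m := by
            have h0 : 0 ≤ k + m := by omega
            rwa [_root_.abs_of_nonneg h0] at hs
          have hmk' : (-(m:ℝ)) < (k:ℝ) := by
            have : -m < k := by omega
            exact_mod_cast this
          obtain ⟨c, hc, heq⟩ := mvt_poly F hmk'
          have hcK : (K:ℝ) ≤ |c| := by
            have hcpos : 0 ≤ c := by
              have := hc.1; linarith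
            rw [_root_.abs_of_nonneg hcpos]; linarith [hc.1]
          have hcpos : (0:ℝ) ≤ c := by linarith [hc.1]
          have hql : ε * (-(m:ℝ)) ^ e ≤ |q.eval c| := by
            refine le_trans (mul_le_mul_of_nonneg_left
              (pow_le_pow_left₀ (by linarith) ?_ e) hε.le) (hqlow c hcK)
            rw [_root_.abs_of_nonneg hcpos]
            linarith [hc.1]
          -- F k - F m = (F k - F (-m)) - HH (-m)
          have hdecomp : F.eval (k:ℝ) - F.eval (m:ℝ)
              = (F.eval (k:ℝ) - F.eval (-(m:ℝ))) - HH.eval (-(m:ℝ)) := by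
            rw [hHHe]; ring_nf
          have hHb : |HH.eval (-(m:ℝ))| ≤ C * (-(m:ℝ)) ^ e :=
            hCb hev _ (by linarith)
          have hbig : (C + M) ≤ ε * ((k:ℝ) - (-(m:ℝ))) := by
            have h1 : (S:ℝ) + 1 ≤ (k:ℝ) + (m:ℝ) := by exact_mod_cast hs'
            have h2 : (C + M) / ε + 1 ≤ (k:ℝ) + (m:ℝ) := by linarith
            have h3 : (C + M) ≤ ε * ((k:ℝ) + (m:ℝ)) := by
              have h4 : (C + M) / ε ≤ (k:ℝ) + (m:ℝ) := by linarith
              rw [div_le_iff₀ hε] at h4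
              linarith
            calc (C + M) ≤ ε * ((k:ℝ) + (m:ℝ)) := h3
              _ = ε * ((k:ℝ) - (-(m:ℝ))) := by ring
          have hpow1 : (1:ℝ) ≤ (-(m:ℝ)) ^ e := one_le_pow₀ (by linarith)
          have hfirst : ((k:ℝ) - (-(m:ℝ))) * (ε * (-(m:ℝ)) ^ e)
              ≤ |F.eval (k:ℝ) - F.eval (-(m:ℝ))| := by
            rw [heq, _root_.abs_mul, _root_.abs_of_nonneg (show (0:ℝ) ≤ (k:ℝ) - (-(m:ℝ)) by linarith)]
            exact mul_le_mul_of_nonneg_left hql (by linarith)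
          have htri : |F.eval (k:ℝ) - F.eval (-(m:ℝ))| - |HH.eval (-(m:ℝ))|
              ≤ |F.eval (k:ℝ) - F.eval (m:ℝ)| := by
            rw [hdecomp]
            exact _root_.abs_sub_abs_le_abs_sub _ _
          have hchain : (C + M) * (-(m:ℝ)) ^ e - C * (-(m:ℝ)) ^ e
              ≤ |F.eval (k:ℝ) - F.eval (m:ℝ)| := by
            have h5 : (C + M) * (-(m:ℝ)) ^ e ≤ ((k:ℝ) - (-(m:ℝ))) * (ε * (-(m:ℝ)) ^ e) := by
              have := mul_le_mul_of_nonneg_right hbig (by positivity : (0:ℝ) ≤ (-(m:ℝ)) ^ e)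
              linarith [this]
            linarith [le_trans h5 hfirst, htri, hHb]
          nlinarith [hchain, hpow1]
        · -- -m > k
          have hs' : S < -(k + m) := by
            have h0 : k + m < 0 := by omega
            rw [_root_.abs_of_neg h0] at hs; omega
          have hmk' : (m:ℝ) < -(k:ℝ) := by
            have : m < -k := by omega
            exact_mod_cast this
          obtain ⟨c, hc, heq⟩ := mvt_poly F hmk'
          have hkr : (0:ℝ) < (k:ℝ) := by linarith
          have hcK : (K:ℝ) ≤ |c| := by
            have hcneg : c ≤ 0 := by linarith [hc.2]
            rw [_root_.abs_of_nonpos hcneg]; linarith [hc.2]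
          have hql : ε * (k:ℝ) ^ e ≤ |q.eval c| := by
            refine le_trans (mul_le_mul_of_nonneg_left
              (pow_le_pow_left₀ hkr.le ?_ e) hε.le) (hqlow c hcK)
            rw [_root_.abs_of_nonpos (by linarith [hc.2] : c ≤ 0)]
            linarith [hc.2]
          have hdecomp : F.eval (k:ℝ) - F.eval (m:ℝ)
              = (F.eval (-(k:ℝ)) - F.eval (m:ℝ)) + HH.eval (k:ℝ) * (-1) := by
            rw [hHHe]; ring_nf
          have hHb : |HH.eval (k:ℝ)| ≤ C * (k:ℝ) ^ e := hCb hev _ (by linarith)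
          have hbig : (C + M) ≤ ε * (-(k:ℝ) - (m:ℝ)) := by
            have h1 : (S:ℝ) + 1 ≤ -((k:ℝ) + (m:ℝ)) := by
              have : S + 1 ≤ -(k+m) := hs'
              exact_mod_cast this
            have h2 : (C + M) / ε ≤ -(k:ℝ) - (m:ℝ) := by linarith
            rw [div_le_iff₀ hε] at h2
            linarith
          have hpow1 : (1:ℝ) ≤ (k:ℝ) ^ e := one_le_pow₀ (by linarith)
          have hfirst : (-(k:ℝ) - (m:ℝ)) * (ε * (k:ℝ) ^ e)
              ≤ |F.eval (-(k:ℝ)) - F.eval (m:ℝ)| := by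
            rw [heq, _root_.abs_mul, _root_.abs_of_nonneg (show (0:ℝ) ≤ -(k:ℝ) - (m:ℝ) by linarith)]
            exact mul_le_mul_of_nonneg_left hql (by linarith)
          have htri : |F.eval (-(k:ℝ)) - F.eval (m:ℝ)| - |HH.eval (k:ℝ)|
              ≤ |F.eval (k:ℝ) - F.eval (m:ℝ)| := by
            rw [hdecomp]
            have h7 := _root_.abs_sub_abs_le_abs_sub (F.eval (-(k:ℝ)) - F.eval (m:ℝ)) (HH.eval (k:ℝ))
            have he2 : F.eval (-(k:ℝ)) - F.eval (m:ℝ) + HH.eval (k:ℝ) * (-1)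
                = (F.eval (-(k:ℝ)) - F.eval (m:ℝ)) - HH.eval (k:ℝ) := by ring
            rw [he2]
            exact h7
          have h5 : (C + M) * (k:ℝ) ^ e ≤ (-(k:ℝ) - (m:ℝ)) * (ε * (k:ℝ) ^ e) := by
            have := mul_le_mul_of_nonneg_right hbig (by positivity : (0:ℝ) ≤ (k:ℝ) ^ e)
            linarith
          nlinarith [le_trans h5 hfirst, htri, hHb, hpow1]
    · -- odd degree
      exact hR4 hod (k:ℝ) (m:ℝ) (le_trans hKR4 hk.le) (by linarith)
  -- final assembly
  refine ⟨K, hK1, fun k m hk hm hne => ?_⟩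
  have hkm : k ≠ m := fun h => hne (by rw [h])
  have hcase : ∀ j : ℤ, (K:ℝ) < |(j:ℝ)| → (K:ℝ) < (j:ℝ) ∨ (j:ℝ) < -(K:ℝ) := by
    intro j h
    rcases _root_.abs_cases (j:ℝ) with ⟨h1, _⟩ | ⟨h1, _⟩
    · left; linarith
    · right; linarith
  have hone : ∀ k' m' : ℤ, k' < m' → (1:ℝ) ≤ (m':ℝ) - (k':ℝ) := by
    intro k' m' h
    have : k' + 1 ≤ m' := h
    have h2 : ((k':ℝ)) + 1 ≤ (m':ℝ) := by exact_mod_cast this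
    linarith
  rcases hcase k hk with hk' | hk' <;> rcases hcase m hm with hm' | hm'
  · rcases lt_or_gt_of_ne hkm with h | h
    · rw [_root_.abs_sub_comm]
      exact hsame (k:ℝ) (m:ℝ) hk hm (by exact_mod_cast h) (Or.inl (by linarith)) (hone k m h)
    · exact hsame (m:ℝ) (k:ℝ) hm hk (by exact_mod_cast h) (Or.inl (by linarith)) (hone m k h)
  · exact hmix k m hk' hm' hne
  · rw [_root_.abs_sub_comm]
    exact hmix m k hm' hk' (Ne.symm hne)
  · rcases lt_or_gt_of_ne hkm with h | h
    · rw [_root_.abs_sub_comm]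
      exact hsame (k:ℝ) (m:ℝ) hk hm (by exact_mod_cast h) (Or.inr (by linarith)) (hone k m h)
    · exact hsame (m:ℝ) (k:ℝ) hm hk (by exact_mod_cast h) (Or.inr (by linarith)) (hone m k h)

end GapAux

set_option maxHeartbeats 1000000 in
/-- For a real polynomial of degree ≥ 2, γ'(v) = ∞ for every v: for every M > 0 there
is a finite W ⊆ Λ(v) such that distinct points of Λ(v) \ W are at distance ≥ M. -/
theorem stmt_12 (P : Polynomial ℝ) (hdeg : 2 ≤ P.natDegree) :
    ∀ v : ℝ, ∀ M : ℝ, 0 < M →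
      ∃ W : Finset ℝ, ↑W ⊆ LamV (fun k => P.eval (k : ℝ)) v ∧
        ∀ a ∈ LamV (fun k => P.eval (k : ℝ)) v \ ↑W,
          ∀ b ∈ LamV (fun k => P.eval (k : ℝ)) v \ ↑W, a ≠ b → M ≤ |a - b| := by
  intro v M hM
  classical
  set F : Polynomial ℝ := P - Polynomial.C v * Polynomial.X with hF
  have hFd : F.natDegree = P.natDegree := by
    apply Polynomial.natDegree_sub_eq_left_of_natDegree_lt
    calc (Polynomial.C v * Polynomial.X).natDegree ≤ Polynomial.X.natDegree :=
          Polynomial.natDegree_C_mul_le _ _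
      _ = 1 := Polynomial.natDegree_X
      _ < P.natDegree := by omega
  have heval : ∀ k : ℤ, lamk (fun j : ℤ => P.eval (j : ℝ)) v k = F.eval (k : ℝ) := by
    intro k
    simp [lamk, hF]
    ring
  obtain ⟨K, hK1, hKey⟩ := key F (by omega) M hM
  refine ⟨(Finset.Icc (-K) K).image (fun j : ℤ => lamk (fun j : ℤ => P.eval (j : ℝ)) v j),
    ?_, ?_⟩
  · intro x hx
    simp only [Finset.coe_image, Set.mem_image, Finset.mem_coe] at hx
    obtain ⟨j, _, rfl⟩ := hx
    exact ⟨j, rfl⟩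
  · rintro a ha b hb hab
    obtain ⟨hamem, haW⟩ := ha
    obtain ⟨hbmem, hbW⟩ := hb
    obtain ⟨k, rfl⟩ := hamem
    obtain ⟨m, rfl⟩ := hbmem
    have hbound : ∀ j : ℤ, lamk (fun j : ℤ => P.eval (j : ℝ)) v j ∉
        ((Finset.Icc (-K) K).image (fun j : ℤ => lamk (fun j : ℤ => P.eval (j : ℝ)) v j) :
          Finset ℝ) → (K : ℝ) < |(j : ℝ)| := by
      intro j hj
      by_contra h
      push_neg at h
      have h1 : |j| ≤ K := by
        have : ((|j| : ℤ) : ℝ) ≤ (K : ℝ) := by push_cast; exact h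
        exact_mod_cast this
      exact hj (Finset.mem_image.mpr ⟨j, Finset.mem_Icc.mpr (_root_.abs_le.mp h1), rfl⟩)
    have hk := hbound k (by simpa using haW)
    have hm := hbound m (by simpa using hbW)
    have hne : F.eval (k : ℝ) ≠ F.eval (m : ℝ) := by
      rw [← heval k, ← heval m]
      exact hab
    have := hKey k m hk hm hne
    rwa [heval k, heval m]
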